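/- Let R be an η-symmetric linear operator on ℝ^5 and λ1, λ2 ∈ ℝ. Then there do not exist vectors X1, X2, X3, X4, X5 forming a basis of ℝ^5 and satisfying the Jordan chain relations R X1 = λ1 X1, R X2 = λ1 X2 + X1, R X3 = λ1 X3 + X2, R X4 = λ1 X4 + X3, R X5 = λ2 X5. (A second order symmetric tensor on a 5-dimensional Lorentzian space cannot have Segre type [41] or its degeneracy [(41)].) -/
import Mathlib


/-- The 5-dimensional Minkowski bilinear form of signature (-,+,+,+,+). -/
def eta (u v : Fin 5 → ℝ) : ℝ :=
  -u 0 * v 0 + u 1 * v 1 + u 2 * v 2 + u 3 * v 3 + u 4 * v 4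

lemma sqz (x y z w : ℝ) (h : x ^ 2 + y ^ 2 + z ^ 2 + w ^ 2 = 0) :
    x = 0 ∧ y = 0 ∧ z = 0 ∧ w = 0 := by
  have hx : x ^ 2 = 0 := by nlinarith [sq_nonneg y, sq_nonneg z, sq_nonneg w]
  have hy : y ^ 2 = 0 := by nlinarith [sq_nonneg x, sq_nonneg z, sq_nonneg w]
  have hz : z ^ 2 = 0 := by nlinarith [sq_nonneg x, sq_nonneg y, sq_nonneg w]
  have hw : w ^ 2 = 0 := by nlinarith [sq_nonneg x, sq_nonneg y, sq_nonneg z]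
  exact ⟨(pow_eq_zero_iff two_ne_zero).mp hx, (pow_eq_zero_iff two_ne_zero).mp hy,
    (pow_eq_zero_iff two_ne_zero).mp hz, (pow_eq_zero_iff two_ne_zero).mp hw⟩

theorem no_segre_type_41 (R : (Fin 5 → ℝ) →ₗ[ℝ] (Fin 5 → ℝ))
    (hR : ∀ u v : Fin 5 → ℝ, eta (R u) v = eta u (R v)) (lam1 lam2 : ℝ) :
    ¬ ∃ X1 X2 X3 X4 X5 : Fin 5 → ℝ,
      (LinearIndependent ℝ ![X1, X2, X3, X4, X5] ∧
        Submodule.span ℝ {X1, X2, X3, X4, X5} = ⊤) ∧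
      R X1 = lam1 • X1 ∧
      R X2 = lam1 • X2 + X1 ∧
      R X3 = lam1 • X3 + X2 ∧
      R X4 = lam1 • X4 + X3 ∧
      R X5 = lam2 • X5 := by
  rintro ⟨X1, X2, X3, X4, X5, ⟨hli, -⟩, h1, h2, h3, h4, h5⟩
  -- eta(X1,X1) = 0
  have e11 : -X1 0 * X1 0 + X1 1 * X1 1 + X1 2 * X1 2 + X1 3 * X1 3 + X1 4 * X1 4 = 0 := by
    have h := hR X2 X1
    rw [h1, h2] at h
    simp only [eta, Pi.add_apply, Pi.smul_apply, smul_eq_mul] at h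
    linear_combination h
  -- eta(X2,X1) = 0
  have e21 : -X2 0 * X1 0 + X2 1 * X1 1 + X2 2 * X1 2 + X2 3 * X1 3 + X2 4 * X1 4 = 0 := by
    have h := hR X3 X1
    rw [h1, h3] at h
    simp only [eta, Pi.add_apply, Pi.smul_apply, smul_eq_mul] at h
    linear_combination h
  -- eta(X3,X1) = 0
  have e31 : -X3 0 * X1 0 + X3 1 * X1 1 + X3 2 * X1 2 + X3 3 * X1 3 + X3 4 * X1 4 = 0 := by
    have h := hR X4 X1
    rw [h1, h4] at h
    simp only [eta, Pi.add_apply, Pi.smul_apply, smul_eq_mul] at h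
    linear_combination h
  -- eta(X2,X2) = eta(X3,X1) = 0
  have e22 : -X2 0 * X2 0 + X2 1 * X2 1 + X2 2 * X2 2 + X2 3 * X2 3 + X2 4 * X2 4 = 0 := by
    have h := hR X3 X2
    rw [h2, h3] at h
    simp only [eta, Pi.add_apply, Pi.smul_apply, smul_eq_mul] at h
    linear_combination h + e31
  -- The cross terms vanish: X2 0 • X1 - X1 0 • X2 = 0 componentwise
  have hsq : (X2 0 * X1 1 - X1 0 * X2 1)^2 + (X2 0 * X1 2 - X1 0 * X2 2)^2
      + (X2 0 * X1 3 - X1 0 * X2 3)^2 + (X2 0 * X1 4 - X1 0 * X2 4)^2 = 0 := by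
    linear_combination (X2 0)^2 * e11 + (X1 0)^2 * e22 - 2 * (X1 0) * (X2 0) * e21
  obtain ⟨t1, t2, t3, t4⟩ := sqz _ _ _ _ hsq
  -- Use linear independence with coefficients (X2 0, -(X1 0), 0, 0, 0)
  have hg := Fintype.linearIndependent_iff.mp hli ![X2 0, -(X1 0), 0, 0, 0] ?_
  · have ha0 : X1 0 = 0 := by
      have := hg 1
      simp at this
      linarith
    -- X1 is null with zero time component, hence X1 = 0
    have hX1 : X1 = 0 := by
      funext i
      have hsum : (X1 1)^2 + (X1 2)^2 + (X1 3)^2 + (X1 4)^2 = 0 := by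
        rw [ha0] at e11; nlinarith [e11]
      obtain ⟨s1, s2, s3, s4⟩ := sqz _ _ _ _ hsum
      fin_cases i <;> simp [ha0, s1, s2, s3, s4]
    have := hli.ne_zero 0
    simp [hX1] at this
  · funext i
    simp only [Fin.sum_univ_five, Matrix.cons_val_zero, Matrix.cons_val_one, Matrix.head_cons,
      Matrix.cons_val_two, Matrix.tail_cons, Matrix.cons_val_three, Matrix.cons_val_four,
      Pi.add_apply, Pi.smul_apply, smul_eq_mul, Pi.zero_apply, neg_mul, zero_mul, add_zero]
    fin_cases i
    · simp; ring
    · simp; linarith [t1]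
    · simp; linarith [t2]
    · simp; linarith [t3]
    · simp; linarith [t4]
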